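/- Let f be holomorphic on the open unit disk D with |f(z)| < 1 on D, let k ≥ 1, and suppose the Taylor coefficients of f at 0 satisfy a₀ = a₁ = ⋯ = a_{k−1} = 0. Suppose further that for some b with |b| = 1, f extends continuously to b, |f(b)| = 1, and f'(b) exists. Then |f'(b)| ≥ k, with equality only if f(z) = e^{iα} z^k on D for some real α. -/

import Mathlib

open Complex Filter
open Metric Set
open scoped NNReal Topology


lemma normSq_mobius (a w : ℂ) :
    Complex.normSq (1 - (starRingEnd ℂ) a * w) - Complex.normSq (a - w)
      = (1 - Complex.normSq a) * (1 - Complex.normSq w) := by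
  simp only [Complex.normSq_apply, Complex.sub_re, Complex.sub_im, Complex.mul_re,
    Complex.mul_im, Complex.one_re, Complex.one_im, Complex.conj_re, Complex.conj_im]
  ring

lemma mobius_lt {a w : ℂ} (ha : ‖a‖ < 1) (hw : ‖w‖ < 1) :
    ‖a - w‖ < ‖1 - (starRingEnd ℂ) a * w‖ := by
  have h1 : Complex.normSq a < 1 := by nlinarith [Complex.sq_norm a, norm_nonneg a]
  have h2 : Complex.normSq w < 1 := by nlinarith [Complex.sq_norm w, norm_nonneg w]
  have key := normSq_mobius a w
  have hlt : ‖a - w‖ ^ 2 < ‖1 - (starRingEnd ℂ) a * w‖ ^ 2 := by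
    rw [Complex.sq_norm, Complex.sq_norm]; nlinarith
  exact lt_of_pow_lt_pow_left₀ 2 (norm_nonneg _) hlt

lemma key_real {r s x : ℝ} (hr0 : 0 < r) (hr1 : r < 1) (hs0 : 0 ≤ s) (hs1 : s < 1)
    (hx0 : 0 ≤ x)
    (H : (x - s)^2 * (1 - r^2) ≤ r^2 * (1 - s^2) * (1 - x^2)) :
    (1 + r*s) * x ≤ s + r := by
  by_contra hcon
  push_neg at hcon
  have h1 : 0 < (1 + r*s)*x - (s + r) := by linarith
  have hrs : r * s < 1 := by nlinarith
  have key2 : (1 + r*s) * ((1 - r*s)*x - (s - r))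
      = (1 - r*s) * ((1 + r*s)*x - (s + r)) + 2*r*(1 - s^2) := by ring
  have h2 : 0 < (1 - r*s)*x - (s - r) := by
    nlinarith [key2, mul_pos (sub_pos.mpr hrs) h1,
      mul_pos hr0 (show (0:ℝ) < 1 - s^2 by nlinarith), mul_nonneg hr0.le hs0]
  nlinarith [mul_pos h1 h2]


lemma exists_factor (f : ℂ → ℂ) (k : ℕ) (hk : 1 ≤ k)
    (ha : DifferentiableOn ℂ f (ball (0:ℂ) 1))
    (hf0 : f 0 = 0)
    (hcoeff : ∀ n < k, iteratedDeriv n f 0 = 0) :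
    ∃ g : ℂ → ℂ, DifferentiableOn ℂ g (ball (0:ℂ) 1) ∧
      ∀ z ∈ ball (0:ℂ) 1, f z = z ^ k * g z := by
  have hd2 : DifferentiableOn ℂ f (closedBall (0:ℂ) ((1/2 : ℝ≥0) : ℝ)) :=
    ha.mono (closedBall_subset_ball (by norm_num))
  have hp : HasFPowerSeriesOnBall f (cauchyPowerSeries f 0 ((1/2 : ℝ≥0) : ℝ)) 0 (1/2 : ℝ≥0) :=
    hd2.hasFPowerSeriesOnBall (by norm_num)
  set p := cauchyPowerSeries f 0 ((1/2 : ℝ≥0) : ℝ) with hpdef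
  have hpa : HasFPowerSeriesAt f p 0 := hp.hasFPowerSeriesAt
  have hpc : ∀ n < k, p.coeff n = 0 := by
    intro n hn
    have h1 := hp.factorial_smul (1 : ℂ) n
    have h2 : iteratedFDeriv ℂ n f 0 (fun _ => (1:ℂ)) = iteratedDeriv n f 0 :=
      (iteratedDeriv_eq_iteratedFDeriv).symm
    rw [h2, hcoeff n hn] at h1
    have h3 : (n.factorial : ℂ) * p.coeff n = 0 := by
      rw [← nsmul_eq_mul]; exact h1
    rcases mul_eq_zero.mp h3 with h | h
    · exact absurd h (by exact_mod_cast n.factorial_ne_zero)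
    · exact h
  by_cases hp0 : p = 0
  · refine ⟨0, differentiableOn_const 0, ?_⟩
    have hev : ∀ᶠ z in 𝓝 (0:ℂ), f z = 0 := hpa.locally_zero_iff.mpr hp0
    have han : AnalyticOnNhd ℂ f (ball (0:ℂ) 1) := ha.analyticOnNhd isOpen_ball
    have h0mem : (0:ℂ) ∈ ball (0:ℂ) 1 := mem_ball_self one_pos
    have heq : EqOn f 0 (ball (0:ℂ) 1) :=
      han.eqOn_zero_of_preconnected_of_frequently_eq_zero (convex_ball _ _).isPreconnected
        h0mem ((hev.filter_mono nhdsWithin_le_nhds).frequently)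
    intro z hz
    simp [heq hz]
  · have horder : k ≤ p.order := by
      by_contra h
      push_neg at h
      exact p.apply_order_ne_zero hp0 (FormalMultilinearSeries.coeff_eq_zero.mp (hpc _ h))
    set G : ℂ → ℂ := (Function.swap dslope 0)^[p.order] f with hGdef
    have hGa : AnalyticAt ℂ G 0 := ⟨_, hpa.has_fpower_series_iterate_dslope_fslope p.order⟩
    have hEq : ∀ᶠ z in 𝓝 (0:ℂ), f z = (z - 0) ^ p.order • G z :=
      Filter.Eventually.of_forall hpa.eq_pow_order_mul_iterate_dslope
    set h : ℂ → ℂ := fun z => z ^ (p.order - k) * G z with hhdef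
    have hfh : ∀ᶠ z in 𝓝 (0:ℂ), f z = z ^ k * h z := by
      filter_upwards [hEq] with z hz
      rw [hz]
      simp only [sub_zero, smul_eq_mul, hhdef]
      rw [← mul_assoc, ← pow_add, Nat.add_sub_cancel' horder]
    have hha : AnalyticAt ℂ h 0 := ((analyticAt_id).pow _).mul hGa
    refine ⟨fun z => if z = 0 then h 0 else f z / z ^ k, ?_, ?_⟩
    · intro z hz
      by_cases hz0 : z = 0
      · subst hz0
        have hgh : (fun w : ℂ => if w = 0 then h 0 else f w / w ^ k) =ᶠ[𝓝 (0:ℂ)] h := by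
          filter_upwards [hfh] with w hw
          by_cases hw0 : w = 0
          · simp [hw0]
          · simp only [hw0, if_false]
            rw [hw, mul_div_cancel_left₀ _ (pow_ne_zero _ hw0)]
        exact (hha.differentiableAt.congr_of_eventuallyEq hgh).differentiableWithinAt
      · have hdiv : DifferentiableWithinAt ℂ (fun w => f w / w ^ k) (ball (0:ℂ) 1) z :=
          (ha z hz).div (differentiableWithinAt_id.pow _) (pow_ne_zero _ hz0)
        refine hdiv.congr_of_eventuallyEq ?_ (by simp [hz0])
        filter_upwards [(eventually_ne_nhds hz0).filter_mono nhdsWithin_le_nhds] with w hw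
        simp [hw]
    · intro z hz
      by_cases hz0 : z = 0
      · subst hz0
        simp [hf0, zero_pow (by omega : k ≠ 0)]
      · simp only [hz0, if_false]
        field_simp


set_option maxHeartbeats 2000000 in
/-- Let `f` be holomorphic on the unit disk with `|f| < 1` there, `k ≥ 1`, with Taylor
coefficients `aₙ = f⁽ⁿ⁾(0)/n!` vanishing for `n < k`. If `f` extends continuously to a
boundary point `b` with `|f b| = 1` and has derivative `fb'` at `b`, then
`|f'(b)| ≥ k`, with equality only if `f z = e^{iα} zᵏ` on the disk for some real `α`. -/
theorem higher_order_boundary_schwarz_rigidity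
    (f : ℂ → ℂ) (k : ℕ) (hk : 1 ≤ k) (b fb' : ℂ)
    (ha : DifferentiableOn ℂ f {z : ℂ | ‖z‖ < 1})
    (hb : ∀ z : ℂ, ‖z‖ < 1 → ‖f z‖ < 1)
    (hcoeff : ∀ n < k, iteratedDeriv n f 0 / (Nat.factorial n : ℂ) = 0)
    (hbmod : ‖b‖ = 1)
    (hcont : ContinuousWithinAt f ({z : ℂ | ‖z‖ < 1} ∪ {b}) b)
    (hfb : ‖f b‖ = 1)
    (hderiv : Tendsto (fun z => (f z - f b) / (z - b))
      (nhdsWithin b {z : ℂ | ‖z‖ < 1}) (nhds fb')) :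
    (k : ℝ) ≤ ‖fb'‖ ∧
      (‖fb'‖ = (k : ℝ) →
        ∃ α : ℝ, ∀ z : ℂ, ‖z‖ < 1 →
          f z = Complex.exp (α * Complex.I) * z ^ k) := by
  have hDeq : {z : ℂ | ‖z‖ < 1} = ball (0:ℂ) 1 := by
    ext z; simp [Complex.dist_eq]
  rw [hDeq] at ha hcont hderiv
  have hmem_iff : ∀ z : ℂ, z ∈ ball (0:ℂ) 1 ↔ ‖z‖ < 1 := by
    intro z; simp [Complex.dist_eq]
  -- derivatives vanish
  have hcoeff' : ∀ n < k, iteratedDeriv n f 0 = 0 := by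
    intro n hn
    have h1 := hcoeff n hn
    rw [div_eq_zero_iff] at h1
    rcases h1 with h | h
    · exact h
    · exact absurd h (by exact_mod_cast n.factorial_ne_zero)
  have hf0 : f 0 = 0 := by
    have := hcoeff' 0 (by omega)
    rwa [iteratedDeriv_zero] at this
  obtain ⟨g, hgd, hfeq⟩ := exists_factor f k hk ha hf0 hcoeff'
  -- |g| ≤ 1 on the ball
  have hg1 : ∀ z ∈ ball (0:ℂ) 1, ‖g z‖ ≤ 1 := by
    intro z hz
    have hzlt : ‖z‖ < 1 := (hmem_iff z).mp hz
    have key : ∀ ρ : ℝ, ‖z‖ < ρ → ρ < 1 → ‖g z‖ ≤ 1 / ρ ^ k := by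
      intro ρ hρ1 hρ2
      have hρ0 : 0 < ρ := lt_of_le_of_lt (norm_nonneg z) hρ1
      have hsub : closedBall (0:ℂ) ρ ⊆ ball (0:ℂ) 1 := closedBall_subset_ball hρ2
      have hdc : DiffContOnCl ℂ g (ball (0:ℂ) ρ) := by
        apply DifferentiableOn.diffContOnCl
        rw [closure_ball (0:ℂ) (ne_of_gt hρ0)]
        exact hgd.mono hsub
      have hfr : ∀ w ∈ frontier (ball (0:ℂ) ρ), ‖g w‖ ≤ 1 / ρ ^ k := by
        intro w hw
        rw [frontier_ball (0:ℂ) (ne_of_gt hρ0)] at hw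
        have habsw : ‖w‖ = ρ := by
          simpa [Complex.dist_eq] using hw
        have hw1 : w ∈ ball (0:ℂ) 1 := by rw [hmem_iff]; rw [habsw]; exact hρ2
        have hwabs : ‖w‖ < 1 := (hmem_iff w).mp hw1
        rw [le_div_iff₀ (pow_pos hρ0 k)]
        calc ‖g w‖ * ρ ^ k = ‖w ^ k * g w‖ := by
              rw [norm_mul, norm_pow, habsw]; ring
        _ = ‖f w‖ := by rw [← hfeq w hw1]
        _ ≤ 1 := le_of_lt (hb w hwabs)
      have hzcl : z ∈ closure (ball (0:ℂ) ρ) := by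
        apply subset_closure
        rw [mem_ball, Complex.dist_eq, sub_zero]
        exact hρ1
      have := Complex.norm_le_of_forall_mem_frontier_norm_le isBounded_ball hdc hfr hzcl
      simpa using this
    have hten : Tendsto (fun ρ : ℝ => 1 / ρ ^ k) (𝓝[<] (1:ℝ)) (𝓝 1) := by
      have hct : ContinuousAt (fun ρ : ℝ => 1 / ρ ^ k) 1 := by
        apply ContinuousAt.div continuousAt_const (continuousAt_pow _ _)
        norm_num
      have := hct.tendsto.mono_left (nhdsWithin_le_nhds (s := Iio (1:ℝ)))
      simpa using this
    refine ge_of_tendsto hten ?_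
    filter_upwards [eventually_mem_nhdsWithin,
      eventually_nhdsWithin_of_eventually_nhds (eventually_gt_nhds hzlt)] with ρ h1 h2
    exact key ρ h2 h1
  -- basic limit setup
  haveI hne : ((𝓝[Set.Ioo (0:ℝ) 1] 1)).NeBot := by
    rw [← mem_closure_iff_nhdsWithin_neBot, closure_Ioo (by norm_num : (0:ℝ) ≠ 1)]
    constructor <;> norm_num
  have hrbD : ∀ r : ℝ, r ∈ Set.Ioo (0:ℝ) 1 → (↑r * b) ∈ ball (0:ℂ) 1 := by
    intro r hr
    rw [hmem_iff, norm_mul, Complex.norm_real, Real.norm_eq_abs, hbmod, mul_one, abs_of_pos hr.1]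
    exact hr.2
  have habsrb : ∀ r : ℝ, r ∈ Set.Ioo (0:ℝ) 1 → ‖↑r * b‖ = r := by
    intro r hr
    rw [norm_mul, Complex.norm_real, Real.norm_eq_abs, hbmod, mul_one, abs_of_pos hr.1]
  have hrbtends : Tendsto (fun r : ℝ => (r : ℂ) * b) (𝓝[Set.Ioo (0:ℝ) 1] 1)
      (𝓝[ball (0:ℂ) 1] b) := by
    rw [tendsto_nhdsWithin_iff]
    constructor
    · have hc : Continuous fun r : ℝ => (r : ℂ) * b :=
        Complex.continuous_ofReal.mul continuous_const
      have := hc.tendsto 1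
      rw [show ((1:ℝ):ℂ) * b = b by simp] at this
      exact this.mono_left nhdsWithin_le_nhds
    · exact eventually_mem_nhdsWithin.mono fun r hr => hrbD r hr
  have hFtends : Tendsto (fun r : ℝ => ‖(f (↑r * b) - f b) / (↑r * b - b)‖)
      (𝓝[Set.Ioo (0:ℝ) 1] 1) (𝓝 (‖fb'‖)) :=
    (continuous_norm.tendsto fb').comp (hderiv.comp hrbtends)
  have hfbtends : Tendsto (fun r : ℝ => f (↑r * b)) (𝓝[Set.Ioo (0:ℝ) 1] 1) (𝓝 (f b)) := by
    have hmono : 𝓝[ball (0:ℂ) 1] b ≤ 𝓝[(ball (0:ℂ) 1) ∪ {b}] b :=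
      nhdsWithin_mono _ subset_union_left
    exact (hcont.mono_left hmono).comp hrbtends
  have habsden : ∀ r : ℝ, r ∈ Set.Ioo (0:ℝ) 1 → ‖(r:ℂ) * b - b‖ = 1 - r := by
    intro r hr
    rw [show (r:ℂ) * b - b = ((r - 1 : ℝ) : ℂ) * b by push_cast; ring]
    rw [norm_mul, Complex.norm_real, Real.norm_eq_abs, hbmod, mul_one, abs_of_nonpos (by linarith [hr.2])]
    ring
  by_cases hcase : ∀ z ∈ ball (0:ℂ) 1, ‖g z‖ < 1
  · -- strict case: |f'(b)| > k
    have h0mem : (0:ℂ) ∈ ball (0:ℂ) 1 := mem_ball_self one_pos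
    set a := g 0 with hadef
    set s := ‖a‖ with hsdef
    have hs1 : s < 1 := hcase 0 h0mem
    have hs0 : 0 ≤ s := norm_nonneg a
    have hden : ∀ w ∈ ball (0:ℂ) 1, (1 : ℂ) - (starRingEnd ℂ) a * g w ≠ 0 := by
      intro w hw hzero
      have h2 : (starRingEnd ℂ) a * g w = 1 := by
        have := sub_eq_zero.mp hzero; exact this.symm
      have h1 : ‖(starRingEnd ℂ) a * g w‖ < 1 := by
        rw [norm_mul, Complex.norm_conj]
        have := hcase w hw
        nlinarith [norm_nonneg (g w)]
      rw [h2] at h1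
      simp at h1
    set G : ℂ → ℂ := fun w => (a - g w) / (1 - (starRingEnd ℂ) a * g w) with hGdef
    have hGd : DifferentiableOn ℂ G (ball (0:ℂ) 1) :=
      ((differentiableOn_const a).sub hgd).div
        (((differentiableOn_const 1)).sub ((differentiableOn_const _).mul hgd)) hden
    have hGmaps : MapsTo G (ball (0:ℂ) 1) (ball (0:ℂ) 1) := by
      intro w hw
      have hlt := mobius_lt (show ‖a‖ < 1 from hs1) (hcase w hw)
      have hpos : 0 < ‖1 - (starRingEnd ℂ) a * g w‖ :=
        norm_pos_iff.mpr (hden w hw)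
      rw [hmem_iff, hGdef]
      simp only [norm_div]
      exact (div_lt_one hpos).mpr hlt
    have hG0 : G 0 = 0 := by
      simp only [hGdef]
      rw [← hadef, sub_self, zero_div]
    have hSch : ∀ w : ℂ, ‖w‖ < 1 → ‖G w‖ ≤ ‖w‖ := by
      intro w hw
      exact Complex.norm_le_norm_of_mapsTo_ball hGd (hGmaps.mono_right ball_subset_closedBall) hG0 hw
    have hev : ∀ᶠ (r : ℝ) in 𝓝[Set.Ioo (0:ℝ) 1] 1,
        (∑ i ∈ Finset.range k, r ^ i) + r ^ k * (1 - s) / 2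
          ≤ ‖(f ((r:ℂ) * b) - f b) / ((r:ℂ) * b - b)‖ := by
      filter_upwards [eventually_mem_nhdsWithin] with r hr
      obtain ⟨hr0, hr1⟩ := hr
      have hzmem : ((r:ℂ) * b) ∈ ball (0:ℂ) 1 := hrbD r ⟨hr0, hr1⟩
      have habsz : ‖(r:ℂ) * b‖ = r := habsrb r ⟨hr0, hr1⟩
      set z : ℂ := (r:ℂ) * b with hzdef
      set x := ‖g z‖ with hxdef
      have hx0 : 0 ≤ x := norm_nonneg _
      have hx1 : x < 1 := hcase z hzmem
      have hS := hSch z (by rw [habsz]; exact hr1)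
      rw [hGdef] at hS
      simp only [norm_div] at hS
      rw [habsz, div_le_iff₀ (norm_pos_iff.mpr (hden z hzmem))] at hS
      have hsq : Complex.normSq (a - g z)
          ≤ r ^ 2 * Complex.normSq (1 - (starRingEnd ℂ) a * g z) := by
        have h1 := Complex.sq_norm (a - g z)
        have h2 := Complex.sq_norm (1 - (starRingEnd ℂ) a * g z)
        nlinarith [norm_nonneg (a - g z),
          norm_nonneg (1 - (starRingEnd ℂ) a * g z), hr0.le]
      have hiden := normSq_mobius a (g z)
      have htri : (x - s) ^ 2 ≤ Complex.normSq (a - g z) := by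
        have h2 : |s - x| ≤ ‖a - g z‖ :=
          abs_norm_sub_norm_le a (g z)
        calc (x - s) ^ 2 = |s - x| ^ 2 := by rw [_root_.sq_abs]; ring
        _ ≤ ‖a - g z‖ ^ 2 := pow_le_pow_left₀ (abs_nonneg _) h2 2
        _ = Complex.normSq (a - g z) := Complex.sq_norm _
      have hns1 : Complex.normSq a = s ^ 2 := (Complex.sq_norm a).symm
      have hns2 : Complex.normSq (g z) = x ^ 2 := (Complex.sq_norm (g z)).symm
      rw [hns1, hns2] at hiden
      have h1r2 : (0:ℝ) ≤ 1 - r ^ 2 := by nlinarith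
      have hkey : (x - s) ^ 2 * (1 - r ^ 2) ≤ r ^ 2 * (1 - s ^ 2) * (1 - x ^ 2) := by
        nlinarith [mul_le_mul_of_nonneg_right htri h1r2, hsq, hiden]
      have hxb := key_real hr0 hr1 hs0 hs1 hx0 hkey
      have hrs1 : (0:ℝ) ≤ 1 - r * s := by nlinarith
      have hx1' : (0:ℝ) ≤ 1 - x := by linarith
      have h1x : (1 - r) * (1 - s) / 2 ≤ 1 - x := by
        nlinarith [hxb, mul_nonneg hrs1 hx1']
      have habsfz : ‖f z‖ = r ^ k * x := by
        rw [hfeq z hzmem, norm_mul, norm_pow, habsz]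
      have hdiff : ‖f b‖ - ‖f z‖ ≤ ‖f z - f b‖ := by
        have hnn := norm_sub_norm_le (f b) (f z)
        rw [norm_sub_rev] at hnn
        simpa using hnn
      rw [hfb, habsfz] at hdiff
      have hrk : 0 < r ^ k := pow_pos hr0 k
      have hlow : (1 - r ^ k) + r ^ k * ((1 - r) * (1 - s) / 2)
          ≤ ‖f z - f b‖ := by
        linarith [hdiff, mul_le_mul_of_nonneg_left h1x hrk.le]
      have hgeom : (∑ i ∈ Finset.range k, r ^ i) * (1 - r) = 1 - r ^ k := by
        linear_combination -(geom_sum_mul r k)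
      rw [norm_div, habsden r ⟨hr0, hr1⟩]
      rw [le_div_iff₀ (by linarith : (0:ℝ) < 1 - r)]
      nlinarith [hlow, hgeom, hrk.le]
    have hpoly : Tendsto (fun r : ℝ => (∑ i ∈ Finset.range k, r ^ i) + r ^ k * (1 - s) / 2)
        (𝓝[Set.Ioo (0:ℝ) 1] 1) (𝓝 ((k : ℝ) + (1 - s) / 2)) := by
      have hcts : Continuous fun r : ℝ => (∑ i ∈ Finset.range k, r ^ i) + r ^ k * (1 - s) / 2 :=
        (continuous_finset_sum _ fun i _ => continuous_pow i).add
          (((continuous_pow k).mul continuous_const).div_const 2)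
      have h1 := (hcts.tendsto 1).mono_left (nhdsWithin_le_nhds (s := Set.Ioo (0:ℝ) 1))
      have hval : (∑ i ∈ Finset.range k, (1:ℝ) ^ i) + (1:ℝ) ^ k * (1 - s) / 2
          = (k : ℝ) + (1 - s) / 2 := by simp
      rwa [hval] at h1
    have hmain : (k : ℝ) + (1 - s) / 2 ≤ ‖fb'‖ :=
      le_of_tendsto_of_tendsto hpoly hFtends hev
    constructor
    · linarith
    · intro heq
      exfalso
      linarith
  · -- rigidity case
    push_neg at hcase
    obtain ⟨z₀, hz₀mem, hz₀⟩ := hcase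
    have hz₀eq : ‖g z₀‖ = 1 := le_antisymm (hg1 z₀ hz₀mem) hz₀
    set c := g z₀ with hcdef
    have hmax : IsMaxOn (norm ∘ g) (ball (0:ℂ) 1) z₀ := by
      intro w hw
      simp only [Function.comp_apply, Set.mem_setOf_eq]
      rw [hz₀eq]
      exact hg1 w hw
    have heqc : EqOn g (Function.const ℂ c) (ball (0:ℂ) 1) :=
      Complex.eqOn_of_isPreconnected_of_isMaxOn_norm (convex_ball _ _).isPreconnected
        isOpen_ball hgd hz₀mem hmax
    have hfc : ∀ z ∈ ball (0:ℂ) 1, f z = c * z ^ k := by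
      intro z hz
      rw [hfeq z hz, heqc hz]
      simp [Function.const]
      ring
    have hfbval : f b = c * b ^ k := by
      have hcts : Continuous fun r : ℝ => c * ((r:ℂ) * b) ^ k :=
        continuous_const.mul ((Complex.continuous_ofReal.mul continuous_const).pow k)
      have h1 : Tendsto (fun r : ℝ => c * ((r:ℂ) * b) ^ k) (𝓝[Set.Ioo (0:ℝ) 1] 1)
          (𝓝 (c * b ^ k)) := by
        have := (hcts.tendsto 1).mono_left (nhdsWithin_le_nhds (s := Set.Ioo (0:ℝ) 1))
        simpa using this
      have h2 : Tendsto (fun r : ℝ => f ((r:ℂ) * b)) (𝓝[Set.Ioo (0:ℝ) 1] 1)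
          (𝓝 (c * b ^ k)) := by
        apply h1.congr'
        filter_upwards [eventually_mem_nhdsWithin] with r hr
        rw [hfc _ (hrbD r hr)]
      exact (tendsto_nhds_unique h2 hfbtends).symm
    have hbne : ∀ z ∈ ball (0:ℂ) 1, z ≠ b := by
      intro z hz heq
      rw [heq, hmem_iff, hbmod] at hz
      exact lt_irrefl 1 hz
    haveI : (𝓝[ball (0:ℂ) 1] b).NeBot := by
      rw [← mem_closure_iff_nhdsWithin_neBot, closure_ball (0:ℂ) one_ne_zero]
      simp [Complex.dist_eq, hbmod]
    have hquot : Tendsto (fun z => (f z - f b) / (z - b)) (𝓝[ball (0:ℂ) 1] b)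
        (𝓝 (c * ((k : ℂ) * b ^ (k - 1)))) := by
      have hcts : Continuous fun z : ℂ => c * ∑ i ∈ Finset.range k, z ^ i * b ^ (k - 1 - i) :=
        continuous_const.mul (continuous_finset_sum _ fun i _ =>
          (continuous_pow i).mul continuous_const)
      have hcont2 : Tendsto (fun z : ℂ => c * ∑ i ∈ Finset.range k, z ^ i * b ^ (k - 1 - i))
          (𝓝[ball (0:ℂ) 1] b)
          (𝓝 (c * ∑ i ∈ Finset.range k, b ^ i * b ^ (k - 1 - i))) :=
        (hcts.tendsto b).mono_left nhdsWithin_le_nhds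
      have hsum : (∑ i ∈ Finset.range k, b ^ i * b ^ (k - 1 - i)) = (k : ℂ) * b ^ (k - 1) := by
        rw [Finset.sum_congr rfl (fun i hi => ?_), Finset.sum_const, Finset.card_range,
          nsmul_eq_mul]
        rw [← pow_add]
        congr 1
        have := Finset.mem_range.mp hi
        omega
      rw [hsum] at hcont2
      apply hcont2.congr'
      filter_upwards [eventually_mem_nhdsWithin] with z hz
      have hzb : z ≠ b := hbne z hz
      rw [hfc z hz, hfbval, eq_div_iff (sub_ne_zero.mpr hzb)]
      linear_combination c * geom_sum₂_mul z b k
    have hfb' : fb' = c * ((k : ℂ) * b ^ (k - 1)) := tendsto_nhds_unique hderiv hquot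
    have habsc : ‖c‖ = 1 := hz₀eq
    have habsfb' : ‖fb'‖ = (k : ℝ) := by
      rw [hfb', norm_mul, habsc, one_mul, norm_mul, norm_pow, hbmod, one_pow, mul_one,
        Complex.norm_natCast]
    constructor
    · exact habsfb'.ge
    · intro _
      refine ⟨Complex.arg c, fun z hz => ?_⟩
      have hexp : Complex.exp (↑(Complex.arg c) * Complex.I) = c := by
        have h3 := Complex.norm_mul_exp_arg_mul_I c
        rwa [habsc, Complex.ofReal_one, one_mul] at h3
      rw [hexp, ← hfc z ((hmem_iff z).mpr hz)]
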